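/- arXiv:2410.12553 — 2 statements merged into one kernel-verified Lean document; each statement's English description precedes it below -/
import Mathlib

section
/- The function u(x) = 2·ln(cosh θ / cosh(θ(1−2x))) satisfies the 1D Bratu equation u''(x) + λ e^{u(x)} = 0 on (0,1) with u(0) = u(1) = 0, provided θ > 0 satisfies cosh θ = 4θ/√(2λ) with λ > 0. -/
open Real in
theorem bratu_1d_explicit_solution (lam θ : ℝ) (hlam : 0 < lam) (hθ : 0 < θ)
    (hcosh : Real.cosh θ = 4 * θ / Real.sqrt (2 * lam))
    (u : ℝ → ℝ)
    (hu : ∀ x, u x = 2 * Real.log (Real.cosh θ / Real.cosh (θ * (1 - 2 * x)))) :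
    (∀ x ∈ Set.Ioo (0:ℝ) 1, deriv (deriv u) x + lam * Real.exp (u x) = 0) ∧
    u 0 = 0 ∧ u 1 = 0 := by
  have hcp : ∀ y : ℝ, (0:ℝ) < Real.cosh y := fun y => Real.cosh_pos (x := y)
  -- inner function derivative
  have hg : ∀ x : ℝ, HasDerivAt (fun y : ℝ => θ * (1 - 2 * y)) (θ * (0 - 2 * 1)) x := by
    intro x
    exact (((hasDerivAt_const x (1:ℝ)).sub ((hasDerivAt_id x).const_mul 2)).const_mul θ)
  -- first derivative of u
  have h1 : ∀ x : ℝ, HasDerivAt u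
      (4 * θ * (Real.sinh (θ * (1 - 2 * x)) / Real.cosh (θ * (1 - 2 * x)))) x := by
    intro x
    have hcosh' : HasDerivAt (fun y : ℝ => Real.cosh (θ * (1 - 2 * y)))
        (Real.sinh (θ * (1 - 2 * x)) * (θ * (0 - 2 * 1))) x :=
      (Real.hasDerivAt_cosh _).comp x (hg x)
    have hlog : HasDerivAt (fun y : ℝ => 2 * Real.log (Real.cosh θ) -
        2 * Real.log (Real.cosh (θ * (1 - 2 * y))))
        (0 - 2 * ((Real.sinh (θ * (1 - 2 * x)) * (θ * (0 - 2 * 1))) /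
          Real.cosh (θ * (1 - 2 * x)))) x :=
      (hasDerivAt_const x _).sub ((hcosh'.log (hcp _).ne').const_mul 2)
    have heq : u = fun y : ℝ => 2 * Real.log (Real.cosh θ) -
        2 * Real.log (Real.cosh (θ * (1 - 2 * y))) := by
      funext y
      rw [hu y, Real.log_div (hcp θ).ne' (hcp _).ne']
      ring
    rw [heq]
    convert hlog using 1
    field_simp
    ring
  have hderiv : deriv u = fun x : ℝ =>
      4 * θ * (Real.sinh (θ * (1 - 2 * x)) / Real.cosh (θ * (1 - 2 * x))) := by
    funext x; exact (h1 x).deriv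
  refine ⟨?_, ?_, ?_⟩
  · intro x _
    set c := θ * (1 - 2 * x) with hc
    have hsinh' : HasDerivAt (fun y : ℝ => Real.sinh (θ * (1 - 2 * y)))
        (Real.cosh c * (θ * (0 - 2 * 1))) x := (Real.hasDerivAt_sinh _).comp x (hg x)
    have hcosh' : HasDerivAt (fun y : ℝ => Real.cosh (θ * (1 - 2 * y)))
        (Real.sinh c * (θ * (0 - 2 * 1))) x := (Real.hasDerivAt_cosh _).comp x (hg x)
    have h2 : HasDerivAt (deriv u)
        (4 * θ * ((Real.cosh c * (θ * (0 - 2 * 1)) * Real.cosh c -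
          Real.sinh c * (Real.sinh c * (θ * (0 - 2 * 1)))) / Real.cosh c ^ 2)) x := by
      rw [hderiv]
      exact (hsinh'.div hcosh' (hcp c).ne').const_mul (4 * θ)
    rw [h2.deriv]
    have hid : Real.cosh c ^ 2 - Real.sinh c ^ 2 = 1 := Real.cosh_sq_sub_sinh_sq c
    have heu : Real.exp (u x) = (Real.cosh θ / Real.cosh c) ^ 2 := by
      rw [hu x, ← hc, show (2:ℝ) * Real.log (Real.cosh θ / Real.cosh c)
        = Real.log ((Real.cosh θ / Real.cosh c) ^ 2) by rw [Real.log_pow]; norm_num,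
        Real.exp_log (by positivity)]
    have hnum : Real.cosh c * (θ * (0 - 2 * 1)) * Real.cosh c -
        Real.sinh c * (Real.sinh c * (θ * (0 - 2 * 1))) = -2 * θ := by
      linear_combination (-2 * θ) * hid
    rw [heu, hcosh, hnum]
    set s := Real.sqrt (2 * lam) with hsdef
    have hs : s ^ 2 = 2 * lam := Real.sq_sqrt (by positivity)
    have hspos : (0:ℝ) < s := Real.sqrt_pos.mpr (by positivity)
    field_simp
    linear_combination (-8 * θ ^ 2) * hs
  · rw [hu 0]
    norm_num [div_self (hcp θ).ne']
  · rw [hu 1]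
    have : θ * (1 - 2 * 1) = -θ := by ring
    rw [this, Real.cosh_neg, div_self (hcp θ).ne', Real.log_one]
    ring
end

section
/- Let Ω ⊂ ℝ^d be a bounded domain, let v₁ > 0 be an eigenfunction of −Δ with Dirichlet boundary conditions and eigenvalue λ₁, normalized so ∫_Ω v₁ = 1. If u > 0 solves Δu + λ e^u = 0 in Ω with u = 0 on ∂Ω and λ > 0, then λ₁ ∫_Ω u v₁ = λ ∫_Ω e^u v₁ ≥ λ e ∫_Ω u v₁, and consequently λ ≤ λ₁/e. -/
open MeasureTheory Set

lemma oneD_aux (U : Set ℝ) (hU : IsOpen U) (hUb : Bornology.IsBounded U)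
    {x : ℝ} (hx : x ∈ U) :
    ∃ a b : ℝ, a < x ∧ x < b ∧ Ioo a b ⊆ U ∧ a ∈ frontier U ∧ b ∈ frontier U ∧
      (∀ y ∈ Ioo a b, sSup (Iic y ∩ Uᶜ) = a ∧ sInf (Ici y ∩ Uᶜ) = b) := by
  obtain ⟨M, hM⟩ := hUb.subset_closedBall 0
  rw [Real.closedBall_eq_Icc] at hM
  set T : Set ℝ := Ici x ∩ Uᶜ with hT
  set S : Set ℝ := Iic x ∩ Uᶜ with hS
  have hTc : IsClosed T := isClosed_Ici.inter hU.isClosed_compl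
  have hSc : IsClosed S := isClosed_Iic.inter hU.isClosed_compl
  have hTne : T.Nonempty := by
    refine ⟨max x (0 + M) + 1, (show x ≤ max x (0 + M) + 1 from le_trans (le_max_left _ _) (le_add_of_nonneg_right zero_le_one)), fun h => ?_⟩
    have := (hM h).2
    have := le_max_right x (0 + M)
    linarith
  have hSne : S.Nonempty := by
    refine ⟨min x (0 - M) - 1, le_trans (by linarith) (min_le_left x _), fun h => ?_⟩
    have := (hM h).1
    have := min_le_right x (0 - M)
    linarith
  have hTbdd : BddBelow T := ⟨x, fun t ht => ht.1⟩
  have hSbdd : BddAbove S := ⟨x, fun t ht => ht.1⟩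
  set b := sInf T with hb
  set a := sSup S with ha
  have hbT : b ∈ T := hTc.csInf_mem hTne hTbdd
  have haS : a ∈ S := hSc.csSup_mem hSne hSbdd
  have hxb : x < b := lt_of_le_of_ne hbT.1 (fun h => hbT.2 (h ▸ hx))
  have hax : a < x := lt_of_le_of_ne haS.1 (fun h => haS.2 (h.symm ▸ hx))
  have hIoo : Ioo a b ⊆ U := by
    intro t ht
    by_contra htU
    rcases le_or_gt t x with h | h
    · exact absurd (le_csSup hSbdd ⟨h, htU⟩) (not_le.2 ht.1)
    · exact absurd (csInf_le hTbdd ⟨h.le, htU⟩) (not_le.2 ht.2)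
  have hfr : ∀ c : ℝ, c ∉ U → c ∈ closure U → c ∈ frontier U := by
    intro c h1 h2
    rw [frontier, hU.interior_eq]
    exact ⟨h2, h1⟩
  have hbf : b ∈ frontier U := by
    refine hfr b hbT.2 ?_
    have : b ∈ closure (Ioo a b) := by
      rw [closure_Ioo (ne_of_lt (hax.trans hxb))]
      exact ⟨(hax.trans hxb).le, le_rfl⟩
    exact closure_mono hIoo this
  have haf : a ∈ frontier U := by
    refine hfr a haS.2 ?_
    have : a ∈ closure (Ioo a b) := by
      rw [closure_Ioo (ne_of_lt (hax.trans hxb))]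
      exact ⟨le_rfl, (hax.trans hxb).le⟩
    exact closure_mono hIoo this
  refine ⟨a, b, hax, hxb, hIoo, haf, hbf, fun y hy => ⟨?_, ?_⟩⟩
  · refine le_antisymm (csSup_le ⟨a, le_of_lt hy.1, haS.2⟩ fun t ht => ?_)
      (le_csSup ⟨y, fun t ht => ht.1⟩ ⟨le_of_lt hy.1, haS.2⟩)
    by_contra hlt
    push_neg at hlt
    exact ht.2 (hIoo ⟨hlt, lt_of_le_of_lt ht.1 hy.2⟩)
  · refine le_antisymm (csInf_le ⟨y, fun t ht => ht.1⟩ ⟨le_of_lt hy.2, hbT.2⟩)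
      (le_csInf ⟨b, le_of_lt hy.2, hbT.2⟩ fun t ht => ?_)
    by_contra hlt
    push_neg at hlt
    exact ht.2 (hIoo ⟨lt_of_lt_of_le hy.1 ht.1, hlt⟩)

lemma oneD (U : Set ℝ) (hU : IsOpen U) (hUb : Bornology.IsBounded U)
    (g : ℝ → ℝ) (hg : ContDiff ℝ 1 g) (hbd : ∀ x ∈ frontier U, g x = 0) :
    ∫ t in U, deriv g t = 0 := by
  set P : Set (ℝ × ℝ) := {p | Ioo p.1 p.2 ⊆ U ∧ p.1 ∈ frontier U ∧ p.2 ∈ frontier U ∧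
      p.1 < p.2 ∧ ∀ y ∈ Ioo p.1 p.2, sSup (Iic y ∩ Uᶜ) = p.1 ∧ sInf (Ici y ∩ Uᶜ) = p.2}
    with hP
  have hcover : U = ⋃ p ∈ P, Ioo p.1 p.2 := by
    apply Subset.antisymm
    · intro x hx
      obtain ⟨a, b, hax, hxb, hsub, haf, hbf, hch⟩ := oneD_aux U hU hUb hx
      exact mem_biUnion (show ((a,b) : ℝ × ℝ) ∈ P from
        ⟨hsub, haf, hbf, hax.trans hxb, hch⟩) ⟨hax, hxb⟩
    · exact iUnion₂_subset fun p hp => hp.1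
  have hPd : P.PairwiseDisjoint (fun p : ℝ × ℝ => Ioo p.1 p.2) := by
    intro p hp q hq hpq
    rw [Function.onFun, Set.disjoint_left]
    intro y hyp hyq
    apply hpq
    have h1 := hp.2.2.2.2 y hyp
    have h2 := hq.2.2.2.2 y hyq
    have : p.1 = q.1 := by rw [← h1.1, h2.1]
    have : p.2 = q.2 := by rw [← h1.2, h2.2]
    exact Prod.ext ‹p.1 = q.1› this
  have hPc : P.Countable :=
    hPd.countable_of_isOpen (fun p _ => isOpen_Ioo) (fun p hp => Set.nonempty_Ioo.2 hp.2.2.2.1)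
  have hInt : IntegrableOn (deriv g) U := by
    have hc : IsCompact (closure U) := Metric.isCompact_of_isClosed_isBounded isClosed_closure hUb.closure
    exact ((hg.continuous_deriv le_rfl).continuousOn.integrableOn_compact hc).mono_set
      subset_closure
  haveI := hPc.to_subtype
  have hre : U = ⋃ p : P, Ioo (p : ℝ × ℝ).1 (p : ℝ × ℝ).2 := by
    rw [hcover, Set.biUnion_eq_iUnion]
  have hiu := MeasureTheory.integral_iUnion (μ := volume)
    (s := fun p : P => Ioo (p : ℝ × ℝ).1 (p : ℝ × ℝ).2) (f := deriv g)
    (fun p => measurableSet_Ioo)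
    (fun i j hij => hPd i.property j.property (Subtype.coe_injective.ne hij)) (hre ▸ hInt)
  rw [hre, hiu]
  have hzero : ∀ p : P, ∫ t in Ioo (p : ℝ × ℝ).1 (p : ℝ × ℝ).2, deriv g t = 0 := by
    intro ⟨p, hp⟩
    have hab := hp.2.2.2.1
    have : ∫ t in Ioo p.1 p.2, deriv g t = ∫ t in p.1..p.2, deriv g t := by
      rw [intervalIntegral.integral_of_le hab.le, integral_Ioc_eq_integral_Ioo]
    rw [this, intervalIntegral.integral_deriv_eq_sub
      (fun x _ => (hg.differentiable one_ne_zero).differentiableAt)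
      ((hg.continuous_deriv le_rfl).intervalIntegrable _ _)]
    rw [hbd _ hp.2.2.1, hbd _ hp.2.1, sub_zero]
  simp only [hzero, tsum_zero]

lemma insertNth_eq_affine {n : ℕ} (i : Fin (n + 1)) (z : Fin n → ℝ) (t : ℝ) :
    i.insertNth t z = (i.insertNth (0:ℝ) z : Fin (n+1) → ℝ) + t • (Pi.single i 1 : Fin (n+1) → ℝ) := by
  funext j
  rcases eq_or_ne j i with rfl | hj
  · simp
  · obtain ⟨k, rfl⟩ := Fin.exists_succAbove_eq hj
    simp [Pi.single_eq_of_ne (i.succAbove_ne k)]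

lemma key {n : ℕ} (Ω : Set (Fin (n + 1) → ℝ)) (hΩo : IsOpen Ω)
    (hΩb : Bornology.IsBounded Ω) (G : (Fin (n + 1) → ℝ) → ℝ) (hG : ContDiff ℝ 1 G)
    (h0 : ∀ x ∈ frontier Ω, G x = 0) (i : Fin (n + 1)) :
    ∫ x in Ω, fderiv ℝ G x (Pi.single i 1) = 0 := by
  obtain ⟨R, hR⟩ := hΩb.subset_closedBall 0
  set DG : (Fin (n + 1) → ℝ) → ℝ := fun x => fderiv ℝ G x (Pi.single i 1) with hDG
  have hDGc : Continuous DG :=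
    (hG.continuous_fderiv one_ne_zero).clm_apply continuous_const
  have hint : IntegrableOn DG Ω := by
    have hc : IsCompact (closure Ω) :=
      Metric.isCompact_of_isClosed_isBounded isClosed_closure hΩb.closure
    exact (hDGc.continuousOn.integrableOn_compact hc).mono_set subset_closure
  set e : ℝ × (Fin n → ℝ) ≃ᵐ (Fin (n + 1) → ℝ) :=
    (MeasurableEquiv.piFinSuccAbove (fun _ => ℝ) i).symm with he
  have hem : MeasurePreserving e :=
    (volume_preserving_piFinSuccAbove (fun _ : Fin (n + 1) => ℝ) i).symm _
  set f : (Fin (n + 1) → ℝ) → ℝ := Ω.indicator DG with hf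
  have hfint : Integrable f := (integrable_indicator_iff hΩo.measurableSet).2 hint
  have h1 : ∫ x in Ω, DG x = ∫ x, f x := (integral_indicator hΩo.measurableSet).symm
  have h2 : ∫ x, f x = ∫ y : ℝ × (Fin n → ℝ), f (e y) := (hem.integral_comp e.measurableEmbedding f).symm
  have hfe : Integrable (fun y => f (e y)) :=
    (hem.integrable_comp_emb e.measurableEmbedding).2 hfint
  rw [h1, h2]
  have h3 : ∫ y : ℝ × (Fin n → ℝ), f (e y) =
      ∫ z : Fin n → ℝ, ∫ t : ℝ, f (e (t, z)) := by
    rw [Measure.volume_eq_prod] at hfe ⊢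
    exact integral_prod_symm _ hfe
  rw [h3]
  have hinner : ∀ z : Fin n → ℝ, (∫ t : ℝ, f (e (t, z))) = 0 := by
    intro z
    have heval : ∀ t : ℝ, e (t, z) = i.insertNth t z := fun t => by
      simp [he, MeasurableEquiv.piFinSuccAbove_symm_apply, Fin.insertNthEquiv]
    set ℓ : ℝ → (Fin (n + 1) → ℝ) := fun t => i.insertNth t z with hℓ
    have hℓeq : ℓ = fun t : ℝ => (i.insertNth (0:ℝ) z : Fin (n+1) → ℝ) + t • (Pi.single i 1 : Fin (n+1) → ℝ) :=
      funext (insertNth_eq_affine i z)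
    have hℓc : ContDiff ℝ 1 ℓ := by
      rw [hℓeq]; exact contDiff_const.add (contDiff_id.smul contDiff_const)
    have hℓd : ∀ t : ℝ, HasDerivAt ℓ (Pi.single i 1) t := by
      intro t
      rw [hℓeq]
      simpa using ((hasDerivAt_id t).smul_const (Pi.single i (1:ℝ) : Fin (n+1) → ℝ)).const_add
        (i.insertNth (0:ℝ) z : Fin (n+1) → ℝ)
    set U : Set ℝ := ℓ ⁻¹' Ω with hU
    have hUo : IsOpen U := hΩo.preimage hℓc.continuous
    have hUb : Bornology.IsBounded U := by
      refine (Metric.isBounded_Icc (-R) R).subset fun t ht => ?_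
      have h1 : ‖ℓ t‖ ≤ R := mem_closedBall_zero_iff.1 (hR ht)
      have h2 : |t| ≤ ‖ℓ t‖ := by
        have := norm_le_pi_norm (ℓ t) i
        simpa [hℓ, Real.norm_eq_abs] using this
      have := h2.trans h1
      rw [abs_le] at this
      exact this
    set g : ℝ → ℝ := fun t => G (ℓ t) with hg
    have hgc : ContDiff ℝ 1 g := hG.comp hℓc
    have hgbd : ∀ t ∈ frontier U, g t = 0 := fun t ht =>
      h0 (ℓ t) (hℓc.continuous.frontier_preimage_subset Ω ht)
    have hderiv : ∀ t : ℝ, deriv g t = DG (ℓ t) := fun t =>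
      (((hG.differentiable one_ne_zero) (ℓ t)).hasFDerivAt.comp_hasDerivAt t (hℓd t)).deriv
    have : (fun t : ℝ => f (e (t, z))) = U.indicator (deriv g) := by
      funext t
      rw [heval t]
      by_cases ht : t ∈ U
      · rw [Set.indicator_of_mem ht, hf, Set.indicator_of_mem (by exact ht), hderiv t]
      · rw [Set.indicator_of_notMem ht, hf, Set.indicator_of_notMem (by exact ht)]
    rw [this, integral_indicator hUo.measurableSet]
    exact oneD U hUo hUb g hgc hgbd
  simp only [hinner, integral_zero]

/-- The Laplacian of `u : ℝ^d → ℝ`, as the sum of second partial derivatives. -/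
noncomputable def laplacian {d : ℕ} (u : (Fin d → ℝ) → ℝ) (x : Fin d → ℝ) : ℝ :=
  ∑ i : Fin d, fderiv ℝ (fun y => fderiv ℝ u y (Pi.single i 1)) x (Pi.single i 1)

lemma key' (d : ℕ) (Ω : Set (Fin d → ℝ)) (hΩo : IsOpen Ω)
    (hΩb : Bornology.IsBounded Ω) (G : (Fin d → ℝ) → ℝ) (hG : ContDiff ℝ 1 G)
    (h0 : ∀ x ∈ frontier Ω, G x = 0) (i : Fin d) :
    ∫ x in Ω, fderiv ℝ G x (Pi.single i 1) = 0 := by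
  cases d with
  | zero => exact i.elim0
  | succ n => exact key Ω hΩo hΩb G hG h0 i

theorem bratu_upper_bound (d : ℕ) (Ω : Set (Fin d → ℝ))
    (hΩopen : IsOpen Ω) (hΩbdd : Bornology.IsBounded Ω) (hΩne : Ω.Nonempty)
    (lam lam₁ : ℝ) (hlam : 0 < lam)
    (v₁ u : (Fin d → ℝ) → ℝ)
    (hv₁smooth : ContDiff ℝ 2 v₁) (husmooth : ContDiff ℝ 2 u)
    (hv₁pos : ∀ x ∈ Ω, 0 < v₁ x)
    (hv₁eig : ∀ x ∈ Ω, -laplacian v₁ x = lam₁ * v₁ x)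
    (hv₁bd : ∀ x ∈ frontier Ω, v₁ x = 0)
    (hnorm : ∫ x in Ω, v₁ x = 1)
    (husol : ∀ x ∈ Ω, laplacian u x + lam * Real.exp (u x) = 0)
    (hupos : ∀ x ∈ Ω, 0 < u x)
    (hubd : ∀ x ∈ frontier Ω, u x = 0) :
    lam₁ * ∫ x in Ω, u x * v₁ x = lam * ∫ x in Ω, Real.exp (u x) * v₁ x ∧
    lam * ∫ x in Ω, Real.exp (u x) * v₁ x ≥ lam * Real.exp 1 * ∫ x in Ω, u x * v₁ x ∧
    lam ≤ lam₁ / Real.exp 1 := by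
  -- integrability helper
  have hIO : ∀ f : (Fin d → ℝ) → ℝ, Continuous f → IntegrableOn f Ω := by
    intro f hf
    have hc : IsCompact (closure Ω) :=
      Metric.isCompact_of_isClosed_isBounded isClosed_closure hΩbdd.closure
    exact (hf.continuousOn.integrableOn_compact hc).mono_set subset_closure
  -- smoothness of first partials
  have hDu : ∀ i : Fin d, ContDiff ℝ 1 (fun y => fderiv ℝ u y (Pi.single i 1)) :=
    fun i => (husmooth.fderiv_right (by norm_num)).clm_apply contDiff_const
  have hDv : ∀ i : Fin d, ContDiff ℝ 1 (fun y => fderiv ℝ v₁ y (Pi.single i 1)) :=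
    fun i => (hv₁smooth.fderiv_right (by norm_num)).clm_apply contDiff_const
  -- the vector field
  set F : Fin d → (Fin d → ℝ) → ℝ :=
    fun i x => v₁ x * fderiv ℝ u x (Pi.single i 1) - u x * fderiv ℝ v₁ x (Pi.single i 1)
    with hF
  have hFsm : ∀ i, ContDiff ℝ 1 (F i) := fun i =>
    ((hv₁smooth.of_le (by norm_num)).mul (hDu i)).sub
      ((husmooth.of_le (by norm_num)).mul (hDv i))
  have hF0 : ∀ i, ∀ x ∈ frontier Ω, F i x = 0 := by
    intro i x hx
    simp [hF, hv₁bd x hx, hubd x hx]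
  -- pointwise divergence identity
  have hpt : ∀ x, ∑ i, fderiv ℝ (F i) x (Pi.single i 1)
      = v₁ x * laplacian u x - u x * laplacian v₁ x := by
    intro x
    rw [laplacian, laplacian, Finset.mul_sum, Finset.mul_sum, ← Finset.sum_sub_distrib]
    refine Finset.sum_congr rfl fun i _ => ?_
    have hv1 : DifferentiableAt ℝ v₁ x := (hv₁smooth.differentiable (by norm_num)).differentiableAt
    have hu1 : DifferentiableAt ℝ u x := (husmooth.differentiable (by norm_num)).differentiableAt
    have hdu : DifferentiableAt ℝ (fun y => fderiv ℝ u y (Pi.single i 1)) x :=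
      ((hDu i).differentiable one_ne_zero).differentiableAt
    have hdv : DifferentiableAt ℝ (fun y => fderiv ℝ v₁ y (Pi.single i 1)) x :=
      ((hDv i).differentiable one_ne_zero).differentiableAt
    have : fderiv ℝ (F i) x = fderiv ℝ
        (fun y => v₁ y * fderiv ℝ u y (Pi.single i 1)) x - fderiv ℝ
        (fun y => u y * fderiv ℝ v₁ y (Pi.single i 1)) x :=
      fderiv_sub (hv1.mul hdu) (hu1.mul hdv)
    rw [this, ContinuousLinearMap.sub_apply, fderiv_fun_mul hv1 hdu, fderiv_fun_mul hu1 hdv]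
    simp only [ContinuousLinearMap.add_apply, ContinuousLinearMap.smul_apply, smul_eq_mul]
    ring
  -- Green's identity
  have hgreen : ∫ x in Ω, (v₁ x * laplacian u x - u x * laplacian v₁ x) = 0 := by
    have : ∀ x, v₁ x * laplacian u x - u x * laplacian v₁ x
        = ∑ i, fderiv ℝ (F i) x (Pi.single i 1) := fun x => (hpt x).symm
    simp_rw [this]
    rw [integral_finset_sum]
    · exact Finset.sum_eq_zero fun i _ =>
        key' d Ω hΩopen hΩbdd (F i) (hFsm i) (hF0 i) i
    · intro i _
      exact hIO _ (((hFsm i).continuous_fderiv one_ne_zero).clm_apply continuous_const)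
  -- integrability of the two integrands
  have hIuv : IntegrableOn (fun x => u x * v₁ x) Ω :=
    hIO _ ((husmooth.continuous).mul (hv₁smooth.continuous))
  have hIev : IntegrableOn (fun x => Real.exp (u x) * v₁ x) Ω :=
    hIO _ ((Real.continuous_exp.comp husmooth.continuous).mul (hv₁smooth.continuous))
  -- the eigen-identity
  have hEq : lam₁ * ∫ x in Ω, u x * v₁ x = lam * ∫ x in Ω, Real.exp (u x) * v₁ x := by
    have h1 : ∫ x in Ω, (v₁ x * laplacian u x - u x * laplacian v₁ x)
        = ∫ x in Ω, (lam₁ * (u x * v₁ x) - lam * (Real.exp (u x) * v₁ x)) := by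
      refine setIntegral_congr_fun hΩopen.measurableSet fun x hx => ?_
      have h2 := husol x hx
      have h3 := hv₁eig x hx
      have hu' : laplacian u x = -(lam * Real.exp (u x)) := by linarith
      have hv' : laplacian v₁ x = -(lam₁ * v₁ x) := by linarith
      rw [hu', hv']
      ring
    rw [hgreen] at h1
    have h4 : ∫ x in Ω, (lam₁ * (u x * v₁ x) - lam * (Real.exp (u x) * v₁ x))
        = lam₁ * (∫ x in Ω, u x * v₁ x) - lam * (∫ x in Ω, Real.exp (u x) * v₁ x) := by
      rw [integral_sub (hIuv.const_mul lam₁) (hIev.const_mul lam),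
        integral_const_mul, integral_const_mul]
    rw [h4] at h1
    linarith
  -- the pointwise exponential inequality
  have hJI : Real.exp 1 * ∫ x in Ω, u x * v₁ x ≤ ∫ x in Ω, Real.exp (u x) * v₁ x := by
    rw [← integral_const_mul]
    refine setIntegral_mono_on (hIuv.const_mul _) hIev hΩopen.measurableSet fun x hx => ?_
    have h : Real.exp 1 * u x ≤ Real.exp (u x) := by
      have h5 : u x ≤ Real.exp (u x - 1) := by
        have := Real.add_one_le_exp (u x - 1)
        linarith
      have h6 : Real.exp 1 * (u x) ≤ Real.exp 1 * Real.exp (u x - 1) :=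
        mul_le_mul_of_nonneg_left h5 (Real.exp_pos 1).le
      rwa [← Real.exp_add, show (1 : ℝ) + (u x - 1) = u x by ring] at h6
    nlinarith [mul_nonneg (sub_nonneg.2 h) (hv₁pos x hx).le]
  -- positivity of the integral
  have hIpos : 0 < ∫ x in Ω, u x * v₁ x := by
    have hnn : 0 ≤ᵐ[volume.restrict Ω] fun x => u x * v₁ x :=
      (ae_restrict_iff' hΩopen.measurableSet).2
        (ae_of_all _ fun x hx => (mul_pos (hupos x hx) (hv₁pos x hx)).le)
    rw [setIntegral_pos_iff_support_of_nonneg_ae hnn hIuv]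
    refine lt_of_lt_of_le (hΩopen.measure_pos volume hΩne) (measure_mono fun x hx => ?_)
    exact ⟨ne_of_gt (mul_pos (hupos x hx) (hv₁pos x hx)), hx⟩
  refine ⟨hEq, ?_, ?_⟩
  · have := mul_le_mul_of_nonneg_left hJI hlam.le
    calc lam * Real.exp 1 * ∫ x in Ω, u x * v₁ x
        = lam * (Real.exp 1 * ∫ x in Ω, u x * v₁ x) := by ring
      _ ≤ lam * ∫ x in Ω, Real.exp (u x) * v₁ x := this
  · rw [le_div_iff₀ (Real.exp_pos 1)]
    nlinarith [hJI, hIpos, hEq, hlam.le]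
end
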